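/- arXiv:0712.4267 — 2 statements merged into one kernel-verified Lean document; each statement's English description precedes it below -/
import Mathlib

section
/- Let g₁, …, gₘ : ℝ^n → ℝ^n be similarities with ratios λ₁, …, λₘ ∈ (0,1) whose images of a nonempty compact set K ⊆ ℝ^n are pairwise disjoint subsets of K, and suppose ∑_{j=1}^m λ_j^t ≥ 1 for some t ≥ 0. Then the attractor L of the iterated function system (g_j) has Hausdorff dimension at least t. -/
open Set MeasureTheory
open scoped NNReal ENNReal
set_option linter.unusedSectionVars false
set_option maxHeartbeats 1000000

namespace MoranAux
variable {X : Type*} [MetricSpace X] {m : ℕ}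

def mG (g : Fin m → X → X) : List (Fin m) → X → X
  | [] => id
  | j :: w => g j ∘ mG g w

def mΛ (lam : Fin m → ℝ) : List (Fin m) → ℝ
  | [] => 1
  | j :: w => lam j * mΛ lam w

@[simp] lemma mG_nil (g : Fin m → X → X) : mG g [] = id := rfl
@[simp] lemma mG_cons (g : Fin m → X → X) (j w) : mG g (j :: w) = g j ∘ mG g w := rfl
@[simp] lemma mΛ_nil (lam : Fin m → ℝ) : mΛ lam [] = 1 := rfl
@[simp] lemma mΛ_cons (lam : Fin m → ℝ) (j w) : mΛ lam (j :: w) = lam j * mΛ lam w := rfl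

lemma mG_append (g : Fin m → X → X) (w₁ w₂ : List (Fin m)) :
    mG g (w₁ ++ w₂) = mG g w₁ ∘ mG g w₂ := by
  induction w₁ with
  | nil => rfl
  | cons j w ih => simp [ih, Function.comp_assoc]

lemma mΛ_append (lam : Fin m → ℝ) (w₁ w₂ : List (Fin m)) :
    mΛ lam (w₁ ++ w₂) = mΛ lam w₁ * mΛ lam w₂ := by
  induction w₁ with
  | nil => simp
  | cons j w ih => simp [ih]; ring

lemma mΛ_pos {lam : Fin m → ℝ} (hlam : ∀ j, 0 < lam j) (w : List (Fin m)) :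
    0 < mΛ lam w := by
  induction w with
  | nil => norm_num
  | cons j w ih => exact mul_pos (hlam j) ih

lemma mG_dist {g : Fin m → X → X} {lam : Fin m → ℝ}
    (hsim : ∀ j, ∀ x y, dist (g j x) (g j y) = lam j * dist x y)
    (w : List (Fin m)) (x y : X) :
    dist (mG g w x) (mG g w y) = mΛ lam w * dist x y := by
  induction w with
  | nil => simp
  | cons j w ih => simp [hsim, ih]; ring

lemma mG_image_subset {g : Fin m → X → X} {L : Set X}
    (hgL : ∀ j, g j '' L ⊆ L) (w : List (Fin m)) : mG g w '' L ⊆ L := by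
  induction w with
  | nil => simp
  | cons j w ih =>
    rw [mG_cons, Set.image_comp]
    exact (Set.image_mono ih).trans (hgL j)

/-- Kraft-type inequality. -/
lemma kraft {g : Fin m → X → X} {lam : Fin m → ℝ} (hlam : ∀ j, 0 < lam j)
    {s : ℝ} (hs : 0 < s) (hsum : ∑ j, lam j ^ s = 1)
    {K L : Set X} (hLK : L ⊆ K) (hgL : ∀ j, g j '' L ⊆ L)
    (hginj : ∀ j, Function.Injective (g j))
    (hdisj : ∀ i j, i ≠ j → Disjoint (g i '' K) (g j '' K))
    (hLne : L.Nonempty) :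
    ∀ (N : ℕ) (F : Finset ℕ) (w : ℕ → List (Fin m)),
      (∀ n ∈ F, (w n).length ≤ N) → (L ⊆ ⋃ n ∈ F, mG g (w n) '' L) →
      1 ≤ ∑ n ∈ F, mΛ lam (w n) ^ s := by
  intro N
  induction N with
  | zero =>
    intro F w hlen hcov
    obtain ⟨x, hx⟩ := hLne
    obtain ⟨n₀, hn₀F, hn₀⟩ := Set.mem_iUnion₂.mp (hcov hx)
    have hw0 : w n₀ = [] := List.length_eq_zero_iff.mp (Nat.le_zero.mp (hlen n₀ hn₀F))
    have h1 : mΛ lam (w n₀) ^ s = 1 := by rw [hw0]; simp [Real.one_rpow]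
    calc (1:ℝ) = mΛ lam (w n₀) ^ s := h1.symm
      _ ≤ ∑ n ∈ F, mΛ lam (w n) ^ s :=
        Finset.single_le_sum (fun i _ => Real.rpow_nonneg (mΛ_pos hlam _).le _) hn₀F
  | succ N ih =>
    intro F w hlen hcov
    by_cases hnil : ∃ n ∈ F, w n = []
    · obtain ⟨n₀, hn₀F, hw0⟩ := hnil
      have h1 : mΛ lam (w n₀) ^ s = 1 := by rw [hw0]; simp [Real.one_rpow]
      calc (1:ℝ) = mΛ lam (w n₀) ^ s := h1.symm
        _ ≤ _ := Finset.single_le_sum (fun i _ => Real.rpow_nonneg (mΛ_pos hlam _).le _) hn₀F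
    · push_neg at hnil
      set Fj : Fin m → Finset ℕ := fun j => F.filter (fun n => (w n).head? = some j) with hFj
      -- decomposition of words in the fibers
      have hdecomp : ∀ j, ∀ n ∈ Fj j, w n = j :: (w n).tail := by
        intro j n hn
        rw [hFj, Finset.mem_filter] at hn
        cases h : w n with
        | nil => rw [h] at hn; simp at hn
        | cons a t => rw [h] at hn; simp at hn; simp [hn.2]
      -- cover for each fiber
      have hcovj : ∀ j, L ⊆ ⋃ n ∈ Fj j, mG g ((w n).tail) '' L := by
        intro j x hx
        have hgx : g j x ∈ L := hgL j ⟨x, hx, rfl⟩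
        obtain ⟨n, hnF, hn⟩ := Set.mem_iUnion₂.mp (hcov hgx)
        obtain ⟨j', w', hw'⟩ : ∃ j' w', w n = j' :: w' := by
          cases h : w n with
          | nil => exact absurd h (hnil n hnF)
          | cons a t => exact ⟨a, t, rfl⟩
        rw [hw', mG_cons, Set.image_comp] at hn
        have hj' : j' = j := by
          by_contra hne
          have h1 : g j x ∈ g j '' K := ⟨x, hLK hx, rfl⟩
          have h2 : g j x ∈ g j' '' K :=
            Set.image_mono ((mG_image_subset hgL w').trans hLK) hn
          exact Set.disjoint_left.mp (hdisj j' j (fun h => hne h)) h2 h1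
        subst hj'
        obtain ⟨c, hc, hcx⟩ := hn
        have hxc : c = x := hginj j' hcx
        refine Set.mem_iUnion₂.mpr ⟨n, ?_, ?_⟩
        · rw [hFj, Finset.mem_filter]; exact ⟨hnF, by simp [hw']⟩
        · rw [hw']; simpa [hxc] using hc
      -- partition of F into fibers
      have hFeq : F = Finset.univ.biUnion Fj := by
        ext n
        simp only [Finset.mem_biUnion, hFj, Finset.mem_filter, Finset.mem_univ, true_and]
        constructor
        · intro hn
          cases h : w n with
          | nil => exact absurd h (hnil n hn)
          | cons a t => exact ⟨a, hn, by simp [h]⟩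
        · rintro ⟨j, hn, -⟩; exact hn
      have hdisjf : ((Finset.univ : Finset (Fin m)) : Set (Fin m)).PairwiseDisjoint Fj := by
        intro j1 _ j2 _ hne
        refine Finset.disjoint_left.mpr ?_
        intro n hn1 hn2
        rw [hFj, Finset.mem_filter] at hn1 hn2
        exact hne (by have := hn1.2.symm.trans hn2.2; simpa using this)
      rw [hFeq, Finset.sum_biUnion hdisjf]
      -- inner sums
      have hinner : ∀ j, ∑ n ∈ Fj j, mΛ lam (w n) ^ s
          = lam j ^ s * ∑ n ∈ Fj j, mΛ lam ((w n).tail) ^ s := by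
        intro j
        rw [Finset.mul_sum]
        refine Finset.sum_congr rfl (fun n hn => ?_)
        rw [hdecomp j n hn]
        simp only [mΛ_cons, List.tail_cons]
        exact Real.mul_rpow (hlam j).le (mΛ_pos hlam _).le
      have hIH : ∀ j, 1 ≤ ∑ n ∈ Fj j, mΛ lam ((w n).tail) ^ s := by
        intro j
        refine ih (Fj j) (fun n => (w n).tail) (fun n hn => ?_) (hcovj j)
        have hnF : n ∈ F := (Finset.mem_filter.mp hn).1
        have h3 := hlen n hnF
        rw [List.length_tail]
        omega
      calc (1:ℝ) = ∑ j, lam j ^ s := hsum.symm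
        _ ≤ ∑ j, lam j ^ s * ∑ n ∈ Fj j, mΛ lam ((w n).tail) ^ s := by
          refine Finset.sum_le_sum (fun j _ => ?_)
          nth_rewrite 1 [← mul_one (lam j ^ s)]
          exact mul_le_mul_of_nonneg_left (hIH j) (Real.rpow_nonneg (hlam j).le _)
        _ = ∑ j, ∑ n ∈ Fj j, mΛ lam (w n) ^ s := by
          refine Finset.sum_congr rfl (fun j _ => (hinner j).symm)

/-- One descent step. -/
lemma descent_step {g : Fin m → X → X} {lam : Fin m → ℝ} (hlam : ∀ j, 0 < lam j)
    (hsim : ∀ j, ∀ x y, dist (g j x) (g j y) = lam j * dist x y)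
    {K L : Set X} (hLK : L ⊆ K) (hL : L = ⋃ j, g j '' L)
    {δ : ℝ}
    (hδsep : ∀ i j, i ≠ j → ∀ x ∈ g i '' K, ∀ y ∈ g j '' K, δ ≤ dist x y)
    {U : Set X} {D : ℝ} (hUD : ∀ x ∈ U, ∀ y ∈ U, dist x y ≤ D)
    (hne : (U ∩ L).Nonempty) {w : List (Fin m)}
    (hw : U ∩ L ⊆ mG g w '' L) (hD : D < δ * mΛ lam w) :
    ∃ j, U ∩ L ⊆ mG g (w ++ [j]) '' L := by
  obtain ⟨x, hxU, hxL⟩ := hne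
  obtain ⟨a, haL, hax⟩ := hw ⟨hxU, hxL⟩
  have haU : a ∈ ⋃ j, g j '' L := hL ▸ haL
  obtain ⟨j, ⟨z, hzL, hza⟩⟩ := Set.mem_iUnion.mp haU
  refine ⟨j, fun y ⟨hyU, hyL⟩ => ?_⟩
  obtain ⟨b, hbL, hby⟩ := hw ⟨hyU, hyL⟩
  have hbU : b ∈ ⋃ j', g j' '' L := hL ▸ hbL
  obtain ⟨j', ⟨z', hz'L, hz'b⟩⟩ := Set.mem_iUnion.mp hbU
  have hjj' : j' = j := by
    by_contra hnej
    have h1 : a ∈ g j '' K := ⟨z, hLK hzL, hza⟩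
    have h2 : b ∈ g j' '' K := ⟨z', hLK hz'L, hz'b⟩
    have hd : δ ≤ dist a b := hδsep j j' (fun h => hnej h.symm) a h1 b h2
    have hxy : dist x y = mΛ lam w * dist a b := by
      rw [← hax, ← hby]; exact mG_dist hsim w a b
    have : δ * mΛ lam w ≤ dist x y := by
      rw [hxy, mul_comm]
      exact mul_le_mul_of_nonneg_left hd (mΛ_pos hlam w).le
    exact absurd (lt_of_le_of_lt (this.trans (hUD x hxU y hyU)) hD) (lt_irrefl _)
  subst hjj'
  rw [mG_append]
  refine ⟨z', hz'L, ?_⟩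
  simp only [Function.comp_apply, mG_cons, mG_nil]
  rw [← hby]
  congr 1

/-- Iterated descent with fuel. -/
lemma descent {g : Fin m → X → X} {lam : Fin m → ℝ} (hlam : ∀ j, 0 < lam j)
    (hsim : ∀ j, ∀ x y, dist (g j x) (g j y) = lam j * dist x y)
    {K L : Set X} (hLK : L ⊆ K) (hL : L = ⋃ j, g j '' L)
    {δ : ℝ}
    (hδsep : ∀ i j, i ≠ j → ∀ x ∈ g i '' K, ∀ y ∈ g j '' K, δ ≤ dist x y)
    {U : Set X} {D : ℝ} (hUD : ∀ x ∈ U, ∀ y ∈ U, dist x y ≤ D)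
    (hne : (U ∩ L).Nonempty)
    {lmax : ℝ} (hl0 : 0 ≤ lmax) (hlmax : ∀ j, lam j ≤ lmax) :
    ∀ (k : ℕ) (w : List (Fin m)), (U ∩ L ⊆ mG g w '' L) →
      ∃ w', (U ∩ L ⊆ mG g w' '' L) ∧
        (δ * mΛ lam w' ≤ D ∨ mΛ lam w' ≤ mΛ lam w * lmax ^ k) := by
  intro k
  induction k with
  | zero => intro w hw; exact ⟨w, hw, Or.inr (by simp)⟩
  | succ k ihk =>
    intro w hw
    by_cases hstop : δ * mΛ lam w ≤ D
    · exact ⟨w, hw, Or.inl hstop⟩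
    · push_neg at hstop
      obtain ⟨j, hj⟩ := descent_step hlam hsim hLK hL hδsep hUD hne hw hstop
      obtain ⟨w', hw', hcase⟩ := ihk (w ++ [j]) hj
      refine ⟨w', hw', ?_⟩
      rcases hcase with h | h
      · exact Or.inl h
      · refine Or.inr (h.trans ?_)
        rw [mΛ_append]
        simp only [mΛ_cons, mΛ_nil, mul_one, pow_succ]
        calc mΛ lam w * lam j * lmax ^ k ≤ mΛ lam w * lmax * lmax ^ k := by
              refine mul_le_mul_of_nonneg_right ?_ (pow_nonneg hl0 k)
              exact mul_le_mul_of_nonneg_left (hlmax j) (mΛ_pos hlam w).le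
          _ = mΛ lam w * (lmax ^ k * lmax) := by ring

theorem moran_main {X : Type*} [MetricSpace X] [MeasurableSpace X] [BorelSpace X] {m : ℕ}
    (g : Fin m → X → X) (lam : Fin m → ℝ) (hlam : ∀ j, 0 < lam j ∧ lam j < 1)
    (hsim : ∀ j, ∀ x y, dist (g j x) (g j y) = lam j * dist x y)
    (K : Set X) (hK : IsCompact K) (hKne : K.Nonempty)
    (hsub : ∀ j, g j '' K ⊆ K)
    (hdisj : ∀ i j, i ≠ j → Disjoint (g i '' K) (g j '' K))
    (s : ℝ) (hs : 0 < s) (hsum : ∑ j, lam j ^ s = 1)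
    (L : Set X) (hLc : IsCompact L) (hLne : L.Nonempty)
    (hL : L = ⋃ j, g j '' L) :
    ENNReal.ofReal s ≤ dimH L := by
  classical
  have hlam0 : ∀ j, 0 < lam j := fun j => (hlam j).1
  -- m is nonzero
  have hm : m ≠ 0 := by
    rintro rfl
    simp at hsum
  -- injectivity and continuity of the maps
  have hginj : ∀ j, Function.Injective (g j) := by
    intro j a b hab
    have h := hsim j a b
    rw [hab, dist_self] at h
    have : dist a b = 0 := by
      have := h.symm
      rcases mul_eq_zero.mp this with h' | h'
      · exact absurd h' (hlam0 j).ne'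
      · exact h'
    exact dist_eq_zero.mp this
  have hcont : ∀ j, Continuous (g j) := by
    intro j
    refine LipschitzWith.continuous (K := ⟨lam j, (hlam0 j).le⟩) ?_
    refine LipschitzWith.of_dist_le_mul fun x y => ?_
    exact le_of_eq (by rw [hsim j x y]; rfl)
  have hgL : ∀ j, g j '' L ⊆ L := by
    intro j
    conv_rhs => rw [hL]
    exact Set.subset_iUnion (fun j => g j '' L) j
  -- maximal ratio
  obtain ⟨jm, -, hjm⟩ := Finset.exists_max_image Finset.univ lam
    ⟨⟨0, Nat.pos_of_ne_zero hm⟩, Finset.mem_univ _⟩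
  set lmax := lam jm with hlmaxdef
  have hlmax : ∀ j, lam j ≤ lmax := fun j => hjm j (Finset.mem_univ j)
  have hl0 : 0 < lmax := hlam0 jm
  have hl1 : lmax < 1 := (hlam jm).2
  -- L ⊆ K
  have hLK : L ⊆ K := by
    obtain ⟨x₀, hx₀L, hx₀⟩ := hLc.exists_isMaxOn hLne
      ((Metric.continuous_infDist_pt K).continuousOn)
    have hx₀max : ∀ y ∈ L, Metric.infDist y K ≤ Metric.infDist x₀ K := fun y hy => hx₀ hy
    have hx₀' : x₀ ∈ ⋃ j, g j '' L := hL ▸ hx₀L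
    obtain ⟨j, ⟨y, hyL, hyx⟩⟩ := Set.mem_iUnion.mp hx₀'
    obtain ⟨z, hzK, hdz⟩ := hK.exists_infDist_eq_dist hKne y
    have h1 : Metric.infDist x₀ K ≤ lmax * Metric.infDist x₀ K := by
      calc Metric.infDist x₀ K ≤ dist x₀ (g j z) :=
            Metric.infDist_le_dist_of_mem (hsub j ⟨z, hzK, rfl⟩)
        _ = lam j * dist y z := by rw [← hyx, hsim]
        _ = lam j * Metric.infDist y K := by rw [← hdz]
        _ ≤ lmax * Metric.infDist x₀ K := by
            refine mul_le_mul (hlmax j) ?_ Metric.infDist_nonneg hl0.le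
            exact hx₀max y hyL
    have h0 : Metric.infDist x₀ K = 0 := by
      nlinarith [Metric.infDist_nonneg (x := x₀) (s := K)]
    intro x hxL
    have hx0 : Metric.infDist x K = 0 :=
      le_antisymm (h0 ▸ hx₀max x hxL) Metric.infDist_nonneg
    by_contra hxK
    have := (hK.isClosed.notMem_iff_infDist_pos hKne).mp hxK
    linarith
  -- m ≥ 2
  have hm2 : 2 ≤ m := by
    by_contra h
    push_neg at h
    obtain rfl : m = 1 := by omega
    rw [Fin.sum_univ_one] at hsum
    have : lam 0 ^ s < 1 := Real.rpow_lt_one (hlam0 0).le (hlam 0).2 hs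
    linarith
  -- separation constant δ
  have hpair : ∀ p : Fin m × Fin m, ∃ δ, 0 < δ ∧
      (p.1 ≠ p.2 → ∀ x ∈ g p.1 '' K, ∀ y ∈ g p.2 '' K, δ ≤ dist x y) := by
    intro p
    by_cases hp : p.1 ≠ p.2
    · have hKj : IsCompact (g p.2 '' K) := hK.image (hcont p.2)
      have hKjne : (g p.2 '' K).Nonempty := hKne.image _
      have hKine : (g p.1 '' K).Nonempty := hKne.image _
      obtain ⟨x₀, hx₀, hminon⟩ := (hK.image (hcont p.1)).exists_isMinOn hKine
        (Metric.continuous_infDist_pt (g p.2 '' K)).continuousOn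
      refine ⟨Metric.infDist x₀ (g p.2 '' K), ?_, fun _ x hx y hy => ?_⟩
      · have hx₀notin : x₀ ∉ g p.2 '' K := fun h =>
          Set.disjoint_left.mp (hdisj _ _ hp) hx₀ h
        exact (hKj.isClosed.notMem_iff_infDist_pos hKjne).mp hx₀notin
      · exact le_trans (hminon hx) (Metric.infDist_le_dist_of_mem hy)
    · exact ⟨1, one_pos, fun h => absurd h hp⟩
  choose δf hδf0 hδfsep using hpair
  have hoffne : (Finset.univ.offDiag : Finset (Fin m × Fin m)).Nonempty := by
    refine ⟨(⟨0, by omega⟩, ⟨1, by omega⟩), ?_⟩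
    simp [Finset.mem_offDiag, Fin.ext_iff]
  obtain ⟨p₀, hp₀mem, hp₀min⟩ := Finset.exists_min_image Finset.univ.offDiag δf hoffne
  set δ := δf p₀ with hδdef
  have hδ : 0 < δ := hδf0 p₀
  have hδsep : ∀ i j, i ≠ j → ∀ x ∈ g i '' K, ∀ y ∈ g j '' K, δ ≤ dist x y := by
    intro i j hij x hx y hy
    have hmem : (i, j) ∈ Finset.univ.offDiag := by simp [Finset.mem_offDiag, hij]
    exact le_trans (hp₀min _ hmem) (hδfsep (i, j) hij x hx y hy)
  -- lower bound for the Hausdorff measure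
  set c : ℝ := δ ^ s * (1 / 2) with hcdef
  have hδs : 0 < δ ^ s := Real.rpow_pos_of_pos hδ s
  have hc : 0 < c := by positivity
  have hμ : ENNReal.ofReal c ≤ μH[s] L := by
    rw [Measure.hausdorffMeasure_apply]
    refine le_iSup₂_of_le (ENNReal.ofReal (δ / 2))
      (ENNReal.ofReal_pos.mpr (by linarith)) ?_
    refine le_iInf fun A => le_iInf fun hAcov => le_iInf fun hAdiam => ?_
    -- real diameters
    set d : ℕ → ℝ := fun n => (EMetric.diam (A n)).toReal with hddef
    have hdne : ∀ n, EMetric.diam (A n) ≠ ⊤ :=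
      fun n => ne_top_of_le_ne_top ENNReal.ofReal_ne_top (hAdiam n)
    have hd0 : ∀ n, 0 ≤ d n := fun n => ENNReal.toReal_nonneg
    have hdle : ∀ n, d n ≤ δ / 2 := by
      intro n
      have h := ENNReal.toReal_mono ENNReal.ofReal_ne_top (hAdiam n)
      rwa [ENNReal.toReal_ofReal (by linarith)] at h
    set η : ℕ → ℝ := fun n => (1 / 2) ^ (n + 3) with hηdef
    have hη : ∀ n, 0 < η n := fun n => by positivity
    -- choose thickening radii
    have hσex : ∀ n, ∃ σ, 0 < σ ∧ d n + σ < δ ∧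
        ((d n + σ) / δ) ^ s ≤ (d n / δ) ^ s + η n := by
      intro n
      have hcont1 : ContinuousAt (fun x : ℝ => (x / δ) ^ s) (d n) := by
        have h1 : ContinuousAt (fun x : ℝ => x / δ) (d n) :=
          ContinuousAt.div_const continuousAt_id δ
        exact ContinuousAt.rpow_const h1 (Or.inr hs.le)
      obtain ⟨σ', hσ', hσ'prop⟩ := Metric.continuousAt_iff.mp hcont1 (η n) (hη n)
      refine ⟨min (σ' / 2) (δ / 4), by positivity, ?_, ?_⟩
      · have h1 : min (σ' / 2) (δ / 4) ≤ δ / 4 := min_le_right _ _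
        linarith [hdle n]
      · have hmin0 : (0:ℝ) < min (σ' / 2) (δ / 4) := by positivity
        have hdist : dist (d n + min (σ' / 2) (δ / 4)) (d n) < σ' := by
          rw [Real.dist_eq, add_sub_cancel_left, abs_of_pos hmin0]
          have := min_le_left (σ' / 2) (δ / 4)
          linarith
        have h := hσ'prop hdist
        rw [Real.dist_eq] at h
        have := le_abs_self (((d n + min (σ' / 2) (δ / 4)) / δ) ^ s - (d n / δ) ^ s)
        linarith
    choose σ hσ0 hσδ hσbound using hσex
    set V : ℕ → Set X := fun n => Metric.thickening (σ n / 2) (A n) with hVdef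
    have hVopen : ∀ n, IsOpen (V n) := fun n => Metric.isOpen_thickening
    have hAV : ∀ n, A n ⊆ V n := fun n => Metric.self_subset_thickening (half_pos (hσ0 n)) _
    have hVD : ∀ n, ∀ x ∈ V n, ∀ y ∈ V n, dist x y ≤ d n + σ n := by
      intro n x hx y hy
      obtain ⟨zx, hzx, hdx⟩ := Metric.mem_thickening_iff.mp hx
      obtain ⟨zy, hzy, hdy⟩ := Metric.mem_thickening_iff.mp hy
      have hzz : dist zx zy ≤ d n := by
        have h := EMetric.edist_le_diam_of_mem hzx hzy
        have h2 := ENNReal.toReal_mono (hdne n) h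
        rwa [← dist_edist] at h2
      have h4 : dist x y ≤ dist x zx + dist zx zy + dist zy y := dist_triangle4 x zx zy y
      have h5 : dist zy y = dist y zy := dist_comm _ _
      linarith
    have hcovV : L ⊆ ⋃ n, V n := hAcov.trans (Set.iUnion_mono hAV)
    obtain ⟨F, hF⟩ := hLc.elim_finite_subcover V hVopen hcovV
    set F' := F.filter (fun n => (V n ∩ L).Nonempty) with hF'def
    have hcovF' : L ⊆ ⋃ n ∈ F', V n := by
      intro x hx
      obtain ⟨n, hnF, hn⟩ := Set.mem_iUnion₂.mp (hF hx)
      exact Set.mem_iUnion₂.mpr ⟨n, Finset.mem_filter.mpr ⟨hnF, ⟨x, hn, hx⟩⟩, hn⟩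
    -- choose words by descent
    have hwex : ∀ n, ∃ wn : List (Fin m), n ∈ F' →
        (V n ∩ L ⊆ mG g wn '' L) ∧ mΛ lam wn ^ s ≤ ((d n + σ n) / δ) ^ s + η n := by
      intro n
      by_cases hn : n ∈ F'
      · have hne : (V n ∩ L).Nonempty := (Finset.mem_filter.mp hn).2
        have hηpos : (0:ℝ) < η n ^ (1 / s) := Real.rpow_pos_of_pos (hη n) _
        obtain ⟨k, hk⟩ := exists_pow_lt_of_lt_one hηpos hl1
        obtain ⟨w', hw', hcase⟩ := descent hlam0 hsim hLK hL hδsep (hVD n) hne hl0.le hlmax k []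
          (by simp)
        refine ⟨w', fun _ => ⟨hw', ?_⟩⟩
        have hΛpos := mΛ_pos hlam0 w'
        rcases hcase with h | h
        · have h1 : mΛ lam w' ≤ (d n + σ n) / δ := by
            rw [le_div_iff₀ hδ]
            calc mΛ lam w' * δ = δ * mΛ lam w' := mul_comm _ _
              _ ≤ d n + σ n := h
          have h2 := Real.rpow_le_rpow hΛpos.le h1 hs.le
          exact h2.trans (le_add_of_nonneg_right (hη n).le)
        · rw [mΛ_nil, one_mul] at h
          have h1 : mΛ lam w' ≤ η n ^ (1 / s) := h.trans hk.le
          have h2 : mΛ lam w' ^ s ≤ (η n ^ (1 / s)) ^ s :=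
            Real.rpow_le_rpow hΛpos.le h1 hs.le
          rw [← Real.rpow_mul (hη n).le, one_div_mul_cancel hs.ne', Real.rpow_one] at h2
          refine h2.trans (le_add_of_nonneg_left ?_)
          exact Real.rpow_nonneg (div_nonneg (by linarith [hd0 n, hσ0 n]) hδ.le) _
      · exact ⟨[], fun h => absurd h hn⟩
    choose w hw using hwex
    -- apply the Kraft inequality
    have hN : ∀ nn ∈ F', (w nn).length ≤ F'.sup (fun n => (w n).length) :=
      fun nn hnn => Finset.le_sup (f := fun n => (w n).length) hnn
    have hcovW : L ⊆ ⋃ n ∈ F', mG g (w n) '' L := by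
      intro x hx
      obtain ⟨n, hnF, hn⟩ := Set.mem_iUnion₂.mp (hcovF' hx)
      exact Set.mem_iUnion₂.mpr ⟨n, hnF, (hw n hnF).1 ⟨hn, hx⟩⟩
    have hkraft := kraft hlam0 hs hsum hLK hgL hginj hdisj hLne _ F' w hN hcovW
    -- real estimates
    have hsum1 : (1:ℝ) ≤ ∑ n ∈ F', ((d n / δ) ^ s + 2 * η n) := by
      refine hkraft.trans (Finset.sum_le_sum fun n hn => ?_)
      have h1 := (hw n hn).2
      have h2 := hσbound n
      linarith
    have hgeo : ∑ n ∈ F', 2 * η n ≤ 1 / 2 := by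
      have hkey : ∀ n : ℕ, 2 * η n = (1 / 4 : ℝ) * (1 / 2) ^ n := by
        intro n; simp only [hηdef]; ring
      have hsummable : Summable (fun n : ℕ => (1 / 4 : ℝ) * (1 / 2) ^ n) :=
        (summable_geometric_of_lt_one (by norm_num) (by norm_num)).mul_left _
      have hle := Summable.sum_le_tsum F' (fun n _ => by positivity) hsummable
      have htsum : ∑' n : ℕ, (1 / 4 : ℝ) * (1 / 2) ^ n = 1 / 2 := by
        rw [tsum_mul_left, tsum_geometric_of_lt_one (by norm_num) (by norm_num)]
        norm_num
      calc ∑ n ∈ F', 2 * η n = ∑ n ∈ F', (1 / 4 : ℝ) * (1 / 2) ^ n :=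
            Finset.sum_congr rfl (fun n _ => hkey n)
        _ ≤ ∑' n : ℕ, (1 / 4 : ℝ) * (1 / 2) ^ n := hle
        _ = 1 / 2 := htsum
    have hdiv : ∀ n, (d n / δ) ^ s = d n ^ s / δ ^ s := fun n => Real.div_rpow (hd0 n) hδ.le s
    have hsplit : ∑ n ∈ F', ((d n / δ) ^ s + 2 * η n)
        = (∑ n ∈ F', d n ^ s) / δ ^ s + ∑ n ∈ F', 2 * η n := by
      rw [Finset.sum_add_distrib, Finset.sum_div]
      congr 1
      exact Finset.sum_congr rfl fun n _ => hdiv n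
    have hdsum : c ≤ ∑ n ∈ F', d n ^ s := by
      rw [hsplit] at hsum1
      have h1 : (1 : ℝ) / 2 ≤ (∑ n ∈ F', d n ^ s) / δ ^ s := by linarith
      rw [le_div_iff₀ hδs] at h1
      calc c = 1 / 2 * δ ^ s := by rw [hcdef]; ring
        _ ≤ _ := h1
    have hAne : ∀ n ∈ F', (A n).Nonempty := by
      intro n hn
      obtain ⟨x, hxV, -⟩ := (Finset.mem_filter.mp hn).2
      obtain ⟨z, hz, -⟩ := Metric.mem_thickening_iff.mp hxV
      exact ⟨z, hz⟩
    have heq : ∀ n ∈ F', (⨆ _ : (A n).Nonempty, EMetric.diam (A n) ^ s)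
        = ENNReal.ofReal (d n ^ s) := by
      intro n hn
      rw [iSup_pos (hAne n hn)]
      conv_lhs => rw [← ENNReal.ofReal_toReal (hdne n)]
      rw [ENNReal.ofReal_rpow_of_nonneg (hd0 n) hs.le]
    calc ENNReal.ofReal c ≤ ENNReal.ofReal (∑ n ∈ F', d n ^ s) :=
          ENNReal.ofReal_le_ofReal hdsum
      _ = ∑ n ∈ F', ENNReal.ofReal (d n ^ s) :=
          ENNReal.ofReal_sum_of_nonneg (fun n _ => Real.rpow_nonneg (hd0 n) s)
      _ = ∑ n ∈ F', ⨆ _ : (A n).Nonempty, EMetric.diam (A n) ^ s :=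
          (Finset.sum_congr rfl heq).symm
      _ ≤ ∑' n, ⨆ _ : (A n).Nonempty, EMetric.diam (A n) ^ s := ENNReal.sum_le_tsum F'
  -- conclude via Hausdorff dimension
  have hne0 : μH[s] L ≠ 0 := by
    intro h
    rw [h, nonpos_iff_eq_zero, ENNReal.ofReal_eq_zero] at hμ
    linarith
  have hfin : ((s.toNNReal : ℝ≥0) : ℝ) = s := Real.coe_toNNReal _ hs.le
  have h : ((s.toNNReal : ℝ≥0) : ℝ≥0∞) ≤ dimH L :=
    le_dimH_of_hausdorffMeasure_ne_zero (by rw [hfin]; exact hne0)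
  simpa [ENNReal.ofReal] using h

end MoranAux

open MoranAux in
/-- Moran's lower bound: if `g₁, …, gₘ` are contracting similarities of `ℝⁿ`
with ratios `λⱼ ∈ (0,1)`, whose images of a nonempty compact set `K` are
pairwise disjoint subsets of `K`, and `∑ λⱼ ^ t ≥ 1`, then the attractor `L`
(the unique nonempty compact set with `L = ⋃ j, g j '' L`) has Hausdorff
dimension at least `t`. -/
theorem stmt_2 {n m : ℕ} (g : Fin m → EuclideanSpace ℝ (Fin n) → EuclideanSpace ℝ (Fin n))
    (lam : Fin m → ℝ) (hlam : ∀ j, 0 < lam j ∧ lam j < 1)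
    (hsim : ∀ j, ∀ x y, dist (g j x) (g j y) = lam j * dist x y)
    (K : Set (EuclideanSpace ℝ (Fin n))) (hK : IsCompact K) (hKne : K.Nonempty)
    (hsub : ∀ j, g j '' K ⊆ K)
    (hdisj : ∀ i j, i ≠ j → Disjoint (g i '' K) (g j '' K))
    (t : ℝ) (ht : 0 ≤ t) (hsum : 1 ≤ ∑ j, lam j ^ t)
    (L : Set (EuclideanSpace ℝ (Fin n))) (hLc : IsCompact L) (hLne : L.Nonempty)
    (hL : L = ⋃ j, g j '' L) :
    ENNReal.ofReal t ≤ dimH L := by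
  rcases eq_or_lt_of_le ht with h0 | ht'
  · rw [← h0]; simp
  -- m ≠ 0
  have hlam0 : ∀ j, 0 < lam j := fun j => (hlam j).1
  have hm : m ≠ 0 := by
    rintro rfl
    simp at hsum
    linarith
  obtain ⟨jm, -, hjm⟩ := Finset.exists_max_image Finset.univ lam
    ⟨⟨0, Nat.pos_of_ne_zero hm⟩, Finset.mem_univ _⟩
  set lmax := lam jm with hlmaxdef
  have hlmax : ∀ j, lam j ≤ lmax := fun j => hjm j (Finset.mem_univ j)
  have hl0 : 0 < lmax := hlam0 jm
  have hl1 : lmax < 1 := (hlam jm).2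
  -- the sum function is continuous
  set f : ℝ → ℝ := fun u => ∑ j, lam j ^ u with hfdef
  have hfc : Continuous f := by
    refine continuous_finset_sum _ fun j _ => ?_
    exact (Real.continuous_exp.comp (continuous_const.mul continuous_id)).congr
      (fun u => (Real.rpow_def_of_pos (hlam0 j) u).symm)
  -- find T ≥ t with f T ≤ 1
  obtain ⟨Nk, hNk⟩ := exists_pow_lt_of_lt_one
    (show (0:ℝ) < 1 / (m + 1) by positivity) hl1
  set T : ℝ := max t Nk with hTdef
  have hTt : t ≤ T := le_max_left _ _
  have hfT : f T < 1 := by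
    have hstep : ∀ j, lam j ^ T ≤ lmax ^ (Nk : ℝ) := by
      intro j
      calc lam j ^ T ≤ lmax ^ T :=
            Real.rpow_le_rpow (hlam0 j).le (hlmax j) (le_trans ht hTt)
        _ ≤ lmax ^ (Nk : ℝ) :=
            Real.rpow_le_rpow_of_exponent_ge hl0 hl1.le (le_max_right _ _)
    have h1 : f T ≤ m * lmax ^ (Nk : ℝ) := by
      calc f T ≤ ∑ _j : Fin m, lmax ^ (Nk : ℝ) := Finset.sum_le_sum fun j _ => hstep j
        _ = m * lmax ^ (Nk : ℝ) := by rw [Finset.sum_const]; simp [mul_comm]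
    have h2 : lmax ^ (Nk : ℝ) < 1 / (m + 1) := by
      rw [Real.rpow_natCast]; exact hNk
    have hmpos : (0:ℝ) < m := by positivity
    calc f T ≤ m * lmax ^ (Nk : ℝ) := h1
      _ < m * (1 / (m + 1)) := by
          exact mul_lt_mul_of_pos_left h2 hmpos
      _ ≤ 1 := by
          rw [mul_one_div, div_le_one (by positivity)]
          linarith
  -- IVT
  have hIVT := intermediate_value_Icc' hTt hfc.continuousOn
  have h1mem : (1:ℝ) ∈ Icc (f T) (f t) := ⟨hfT.le, hsum⟩
  obtain ⟨s, hsIcc, hfs⟩ := hIVT h1mem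
  have hs0 : 0 < s := lt_of_lt_of_le ht' hsIcc.1
  have hmain := moran_main g lam hlam hsim K hK hKne hsub hdisj s hs0 hfs L hLc hLne hL
  exact le_trans (ENNReal.ofReal_le_ofReal hsIcc.1) hmain
end

section
/- Let f : U → ℂ be holomorphic on an open set U ⊆ ℂ and let K ⊆ U be compact and forward invariant (f(K) ⊆ K). Suppose |(f^n)'(z)| ≥ λ > 1 for all z ∈ K and some fixed n. Then there exists δ > 0 such that for every z ∈ K and every m ≥ 1, the inverse branch of f^{nm} fixing the orbit of z is well-defined and univalent on the disk of radius δ around f^{nm}(z); consequently every point of K lies in the radial Julia set in the sense that disks of a fixed radius δ around infinitely many forward iterates pull back univalently along the orbit. -/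
open Set Metric Function

set_option maxHeartbeats 1000000

/-- Successive domains on which the iterates of `f` are defined and holomorphic. -/
private def iterDom (f : ℂ → ℂ) (U : Set ℂ) : ℕ → Set ℂ
  | 0 => U
  | k + 1 => iterDom f U k ∩ f ⁻¹' iterDom f U k

private lemma iterDom_subset (f : ℂ → ℂ) (U : Set ℂ) : ∀ k, iterDom f U k ⊆ U
  | 0 => subset_rfl
  | k + 1 => Set.inter_subset_left.trans (iterDom_subset f U k)

private lemma iterDom_isOpen {U : Set ℂ} (hU : IsOpen U) {f : ℂ → ℂ}
    (hf : DifferentiableOn ℂ f U) : ∀ k, IsOpen (iterDom f U k)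
  | 0 => hU
  | k + 1 => by
      have hk := iterDom_isOpen hU hf k
      exact ContinuousOn.isOpen_inter_preimage
        (hf.continuousOn.mono (iterDom_subset f U k)) hk hk

private lemma subset_iterDom {U : Set ℂ} {f : ℂ → ℂ} {K : Set ℂ} (hKU : K ⊆ U)
    (hinv : Set.MapsTo f K K) : ∀ k, K ⊆ iterDom f U k
  | 0 => hKU
  | k + 1 => fun z hz =>
      ⟨subset_iterDom hKU hinv k hz, subset_iterDom hKU hinv k (hinv hz)⟩

private lemma iterDom_diff {U : Set ℂ} {f : ℂ → ℂ} (hf : DifferentiableOn ℂ f U) :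
    ∀ k, DifferentiableOn ℂ (f^[k]) (iterDom f U k)
  | 0 => by
      simpa [Function.iterate_zero, iterDom] using (differentiableOn_id : DifferentiableOn ℂ id U)
  | k + 1 => by
      rw [Function.iterate_succ]
      exact DifferentiableOn.comp (iterDom_diff hf k)
        (hf.mono (iterDom_subset f U (k + 1))) (fun x hx => hx.2)

/-- Points of a hyperbolic set lie in the radial Julia set: if `K ⊆ U` is
compact, forward invariant, and `|(f^n)'| ≥ λ > 1` on `K`, then there is a
uniform `δ > 0` such that for every `z ∈ K` and every `m ≥ 1` the inverse
branch of `f^{nm}` sending `f^{nm}(z)` back to `z` is defined and univalent on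
the disk of radius `δ` around `f^{nm}(z)`. -/
theorem stmt_15 {U : Set ℂ} (hU : IsOpen U) (f : ℂ → ℂ)
    (hf : DifferentiableOn ℂ f U)
    (K : Set ℂ) (hK : IsCompact K) (hKU : K ⊆ U) (hinv : MapsTo f K K)
    (n : ℕ) (hn : 1 ≤ n) (lam : ℝ) (hlam : 1 < lam)
    (hexp : ∀ z ∈ K, lam ≤ ‖deriv (f^[n]) z‖) :
    ∃ δ : ℝ, 0 < δ ∧
      ∀ z ∈ K, ∀ m : ℕ, 1 ≤ m →
        ∃ g : ℂ → ℂ,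
          DifferentiableOn ℂ g (ball (f^[n * m] z) δ) ∧
          InjOn g (ball (f^[n * m] z) δ) ∧
          g (f^[n * m] z) = z ∧
          ∀ w ∈ ball (f^[n * m] z) δ, f^[n * m] (g w) = w := by
  classical
  set F : ℂ → ℂ := f^[n] with hFdef
  set V : Set ℂ := iterDom f U n with hVdef
  have hVo : IsOpen V := iterDom_isOpen hU hf n
  have hKV : K ⊆ V := subset_iterDom hKU hinv n
  have hFd : DifferentiableOn ℂ F V := iterDom_diff hf n
  have hFan : AnalyticOnNhd ℂ F V := hFd.analyticOnNhd hVo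
  have hF'c : ContinuousOn (deriv F) V := hFan.deriv.continuousOn
  have hFK : MapsTo F K K := hinv.iterate n
  -- norm form of the expansion hypothesis
  have hexp' : ∀ z ∈ K, lam ≤ ‖deriv F z‖ := by
    intro z hz
    simpa using hexp z hz
  -- thickening of K inside V
  obtain ⟨r₀, hr₀, hT⟩ := hK.exists_cthickening_subset_open hVo hKV
  set T : Set ℂ := cthickening r₀ K with hTdef
  have hTc : IsCompact T := hK.cthickening
  -- uniform continuity of deriv F on T
  have hUC : UniformContinuousOn (deriv F) T :=
    hTc.uniformContinuousOn_of_continuous (hF'c.mono hT)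
  set ε : ℝ := (lam - 1) / 2 with hεdef
  have hε : 0 < ε := by simp only [hεdef]; linarith
  obtain ⟨r₁, hr₁, hUC'⟩ := Metric.uniformContinuousOn_iff.mp hUC ε hε
  set r : ℝ := min (r₁ / 2) r₀ with hrdef
  have hr : 0 < r := lt_min (by linarith) hr₀
  have hrr₀ : r ≤ r₀ := min_le_right _ _
  have hrr₁ : r < r₁ := lt_of_le_of_lt (min_le_left _ _) (by linarith)
  -- balls around K stay in T
  have hballT : ∀ z ∈ K, closedBall z r ⊆ T := by
    intro z hz
    exact (closedBall_subset_cthickening hz r).trans (cthickening_mono hrr₀ K)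
  have hballV : ∀ z ∈ K, closedBall z r ⊆ V := fun z hz => (hballT z hz).trans hT
  -- variation of the derivative on small balls
  have hd : ∀ z ∈ K, ∀ a ∈ closedBall z r, ‖deriv F a - deriv F z‖ ≤ ε := by
    intro z hz a ha
    have haT : a ∈ T := hballT z hz ha
    have hzT : z ∈ T := hballT z hz (mem_closedBall_self hr.le)
    have : dist a z < r₁ := lt_of_le_of_lt (mem_closedBall.mp ha) hrr₁
    have := hUC' a haT z hzT this
    rw [dist_eq_norm] at this
    exact this.le
  -- derivative doesn't vanish near K
  have hF'ne : ∀ z ∈ K, ∀ a ∈ closedBall z r, deriv F a ≠ 0 := by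
    intro z hz a ha
    have h1 := hd z hz a ha
    have h2 := hexp' z hz
    intro h0
    rw [h0] at h1
    have : ‖deriv F z‖ ≤ ε := by simpa [norm_sub_rev] using h1
    simp only [hεdef] at this
    linarith
  -- key expansion estimate on small balls
  have hkey : ∀ z ∈ K, ∀ a ∈ closedBall z r, ∀ b ∈ closedBall z r,
      (lam + 1) / 2 * ‖a - b‖ ≤ ‖F a - F b‖ := by
    intro z hz a ha b hb
    set c : ℂ := deriv F z with hcdef
    have hmvt : ‖(F a - c * a) - (F b - c * b)‖ ≤ ε * ‖a - b‖ := by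
      have hderiv : ∀ x ∈ closedBall z r,
          HasDerivWithinAt (fun x => F x - c * x) (deriv F x - c) (closedBall z r) x := by
        intro x hx
        have hxV : x ∈ V := hballV z hz hx
        have h1 : HasDerivAt F (deriv F x) x :=
          (hFd.differentiableAt (hVo.mem_nhds hxV)).hasDerivAt
        have h2 : HasDerivAt (fun x : ℂ => c * x) c x := by
          simpa using (hasDerivAt_id x).const_mul c
        exact (h1.sub h2).hasDerivWithinAt
      have hbound : ∀ x ∈ closedBall z r, ‖deriv F x - c‖ ≤ ε := fun x hx => hd z hz x hx
      exact (convex_closedBall z r).norm_image_sub_le_of_norm_hasDerivWithin_le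
        hderiv hbound hb ha
    have hclam : lam * ‖a - b‖ ≤ ‖c * (a - b)‖ := by
      rw [norm_mul]
      exact mul_le_mul_of_nonneg_right (hexp' z hz) (norm_nonneg _)
    have htri : ‖c * (a - b)‖ ≤ ‖F a - F b‖ + ε * ‖a - b‖ := by
      have : c * (a - b) = (F a - F b) - ((F a - c * a) - (F b - c * b)) := by ring
      rw [this]
      exact le_trans (norm_sub_le _ _) (by gcongr)
    have : (lam - ε) * ‖a - b‖ ≤ ‖F a - F b‖ := by nlinarith [norm_nonneg (a - b)]
    have heq : lam - ε = (lam + 1) / 2 := by simp only [hεdef]; ring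
    linarith [this, heq ▸ this]
  -- the radius of the target disks
  set δ : ℝ := (lam + 1) * r / 4 with hδdef
  have hδ : 0 < δ := by
    have : 0 < lam + 1 := by linarith
    positivity
  have hδr2 : 2 / (lam + 1) * δ = r / 2 := by
    field_simp [hδdef]
    ring
  have hfac_pos : 0 < 2 / (lam + 1) := by positivity
  have hfac_lt : 2 / (lam + 1) < 1 := by
    rw [div_lt_one (by linarith)]; linarith
  have hr2δ : r / 2 ≤ δ := by
    rw [hδdef]; nlinarith
  -- surjectivity of F onto small disks
  have hsurj : ∀ z ∈ K, ∀ w : ℂ, dist w (F z) < δ → ∃ a ∈ closedBall z r, F a = w := by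
    intro z hz w hw
    have hScomp : IsCompact (closedBall z r) := isCompact_closedBall z r
    have hSne : (closedBall z r).Nonempty := ⟨z, mem_closedBall_self hr.le⟩
    have hFcont : ContinuousOn F (closedBall z r) :=
      (hFd.continuousOn).mono (hballV z hz)
    have hcont : ContinuousOn (fun x => dist (F x) w) (closedBall z r) :=
      (continuous_id.dist continuous_const).comp_continuousOn hFcont
    obtain ⟨a, haS, hamin⟩ := hScomp.exists_isMinOn hSne hcont
    refine ⟨a, haS, ?_⟩
    by_contra hne
    have hd0 : 0 < dist (F a) w := dist_pos.mpr hne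
    -- the minimizer is in the interior of the ball
    have haint : dist a z < r := by
      rcases lt_or_eq_of_le (mem_closedBall.mp haS) with h | h
      · exact h
      · exfalso
        have h1 : (lam + 1) / 2 * ‖a - z‖ ≤ ‖F a - F z‖ :=
          hkey z hz a haS z (mem_closedBall_self hr.le)
        have h2 : ‖a - z‖ = r := by rw [← dist_eq_norm]; exact h
        have h3 : 2 * δ ≤ dist (F a) (F z) := by
          rw [dist_eq_norm]
          calc 2 * δ = (lam + 1) / 2 * r := by rw [hδdef]; ring
          _ = (lam + 1) / 2 * ‖a - z‖ := by rw [h2]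
          _ ≤ ‖F a - F z‖ := h1
        have h4 : dist (F a) w ≤ dist (F z) w :=
          isMinOn_iff.mp hamin z (mem_closedBall_self hr.le)
        have h5 : dist (F a) (F z) ≤ dist (F a) w + dist w (F z) := dist_triangle _ _ _
        have h6 : dist (F z) w = dist w (F z) := dist_comm _ _
        linarith
    -- F is locally open at a
    have haV : a ∈ V := hballV z hz haS
    obtain ⟨p, hp⟩ := hFan a haV
    have hstrict : HasStrictDerivAt F (deriv F a) a := by
      have h1 := hp.hasStrictDerivAt
      have h2 : deriv F a = p.coeff 1 := h1.hasDerivAt.deriv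
      rw [h2]; exact h1
    have hmap : Filter.map F (nhds a) = nhds (F a) :=
      hstrict.map_nhds_eq (hF'ne z hz a haS)
    -- find a nearby point with strictly smaller distance to w
    have hN : ball a (r - dist a z) ∈ nhds a :=
      ball_mem_nhds a (by linarith)
    have hNS : ball a (r - dist a z) ⊆ closedBall z r := by
      intro x hx
      rw [mem_ball] at hx
      rw [mem_closedBall]
      calc dist x z ≤ dist x a + dist a z := dist_triangle _ _ _
      _ ≤ r := by linarith
    have himg : F '' ball a (r - dist a z) ∈ nhds (F a) := by
      rw [← hmap]
      exact Filter.image_mem_map hN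
    obtain ⟨ρ, hρ, hρsub⟩ := Metric.mem_nhds_iff.mp himg
    set d : ℝ := dist (F a) w with hddef
    set t : ℝ := min ρ d / 2 with htdef
    have ht : 0 < t := by positivity
    have htρ : t < ρ := by
      have h' : t ≤ ρ / 2 := by
        rw [htdef]; gcongr; exact min_le_left _ _
      linarith
    have htd : t < d := by
      have h' : t ≤ d / 2 := by
        rw [htdef]; gcongr; exact min_le_right _ _
      linarith
    set y : ℂ := F a + (t / d : ℝ) • (w - F a) with hydef
    have hyFa : dist y (F a) = t := by
      rw [hydef, dist_eq_norm]
      have : F a + (t / d : ℝ) • (w - F a) - F a = (t / d : ℝ) • (w - F a) :=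
        add_sub_cancel_left _ _
      rw [this, norm_smul]
      rw [Real.norm_eq_abs, abs_of_pos (by positivity)]
      have : ‖w - F a‖ = d := by rw [hddef, dist_comm, dist_eq_norm]
      rw [this]
      field_simp
    have hyw : dist y w < d := by
      rw [hydef, dist_eq_norm]
      have heq : F a + (t / d : ℝ) • (w - F a) - w = (1 - t / d : ℝ) • (F a - w) := by
        simp only [Complex.real_smul]
        push_cast
        ring
      rw [heq, norm_smul, Real.norm_eq_abs]
      have h1 : (0:ℝ) ≤ 1 - t / d := by
        rw [sub_nonneg, div_le_one hd0]
        exact htd.le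
      rw [abs_of_nonneg h1]
      have h2 : ‖F a - w‖ = d := by rw [hddef, dist_eq_norm]
      rw [h2]
      have h3 : t / d > 0 := by positivity
      nlinarith
    have hy : y ∈ ball (F a) ρ := by rw [mem_ball]; rw [hyFa]; exact htρ
    obtain ⟨x, hxN, hxy⟩ := hρsub hy
    have hxS : x ∈ closedBall z r := hNS hxN
    have : dist (F a) w ≤ dist (F x) w := isMinOn_iff.mp hamin x hxS
    rw [hxy] at this
    linarith
  -- single-step inverse branch
  have hg1 : ∀ z ∈ K, ∃ g : ℂ → ℂ,
      (∀ w ∈ ball (F z) δ, F (g w) = w) ∧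
      (∀ w ∈ ball (F z) δ, dist (g w) z ≤ 2 / (lam + 1) * dist w (F z)) ∧
      g (F z) = z ∧
      DifferentiableOn ℂ g (ball (F z) δ) ∧
      InjOn g (ball (F z) δ) := by
    intro z hz
    set g : ℂ → ℂ := fun w =>
      if h : w ∈ ball (F z) δ then (hsurj z hz w (mem_ball.mp h)).choose else z with hgdef
    have hgmem : ∀ w ∈ ball (F z) δ, g w ∈ closedBall z r ∧ F (g w) = w := by
      intro w hw
      have := (hsurj z hz w (mem_ball.mp hw)).choose_spec
      simp only [hgdef, dif_pos hw]
      exact this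
    have hleft : ∀ w ∈ ball (F z) δ, F (g w) = w := fun w hw => (hgmem w hw).2
    have hdist : ∀ w ∈ ball (F z) δ, dist (g w) z ≤ 2 / (lam + 1) * dist w (F z) := by
      intro w hw
      have h1 := hkey z hz (g w) (hgmem w hw).1 z (mem_closedBall_self hr.le)
      rw [hleft w hw] at h1
      rw [dist_eq_norm, dist_eq_norm]
      rw [div_mul_eq_mul_div, le_div_iff₀ (by linarith : (0:ℝ) < lam + 1)]
      nlinarith [h1, norm_nonneg (g w - z), norm_nonneg (w - F z)]
    have hfix : g (F z) = z := by
      have hFz : F z ∈ ball (F z) δ := mem_ball_self hδ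
      have h1 := hkey z hz (g (F z)) (hgmem _ hFz).1 z (mem_closedBall_self hr.le)
      rw [hleft _ hFz] at h1
      have h2 : ‖g (F z) - z‖ ≤ 0 := by
        have : ‖F z - F z‖ = 0 := by simp
        nlinarith [norm_nonneg (g (F z) - z)]
      exact sub_eq_zero.mp (norm_le_zero_iff.mp h2)
    have hinj : InjOn g (ball (F z) δ) := by
      intro w hw w' hw' hww'
      have h1 := hleft w hw
      have h2 := hleft w' hw'
      rw [← h1, ← h2, hww']
    have hlip : ∀ w ∈ ball (F z) δ, ∀ w' ∈ ball (F z) δ,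
        dist (g w) (g w') ≤ 2 / (lam + 1) * dist w w' := by
      intro w hw w' hw'
      have h1 := hkey z hz (g w) (hgmem w hw).1 (g w') (hgmem w' hw').1
      rw [hleft w hw, hleft w' hw'] at h1
      rw [dist_eq_norm, dist_eq_norm]
      rw [div_mul_eq_mul_div, le_div_iff₀ (by linarith : (0:ℝ) < lam + 1)]
      nlinarith [norm_nonneg (g w - g w'), norm_nonneg (w - w')]
    have hgcont : ContinuousOn g (ball (F z) δ) := by
      have : LipschitzOnWith (Real.toNNReal (2 / (lam + 1))) g (ball (F z) δ) := by
        apply LipschitzOnWith.of_dist_le_mul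
        intro x hx y hy
        calc dist (g x) (g y) ≤ 2 / (lam + 1) * dist x y := hlip x hx y hy
        _ = (Real.toNNReal (2 / (lam + 1)) : ℝ) * dist x y := by
            rw [Real.coe_toNNReal _ hfac_pos.le]
      exact this.continuousOn
    have hgdiff : DifferentiableOn ℂ g (ball (F z) δ) := by
      intro w₀ hw₀
      have ha : g w₀ ∈ closedBall z r := (hgmem w₀ hw₀).1
      have haV : g w₀ ∈ V := hballV z hz ha
      have hFder : HasDerivAt F (deriv F (g w₀)) (g w₀) :=
        (hFd.differentiableAt (hVo.mem_nhds haV)).hasDerivAt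
      have hgc : ContinuousAt g w₀ :=
        hgcont.continuousAt (isOpen_ball.mem_nhds hw₀)
      have hev : ∀ᶠ y in nhds w₀, F (g y) = y :=
        Filter.eventually_of_mem (isOpen_ball.mem_nhds hw₀) hleft
      have := HasDerivAt.of_local_left_inverse hgc hFder (hF'ne z hz _ ha) hev
      exact this.differentiableAt.differentiableWithinAt
    exact ⟨g, hleft, hdist, hfix, hgdiff, hinj⟩
  -- inverse branches of all iterates, by induction
  have main : ∀ m : ℕ, 1 ≤ m → ∀ z ∈ K, ∃ g : ℂ → ℂ,
      (∀ w ∈ ball (F^[m] z) δ, F^[m] (g w) = w) ∧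
      (∀ w ∈ ball (F^[m] z) δ, dist (g w) z ≤ 2 / (lam + 1) * dist w (F^[m] z)) ∧
      g (F^[m] z) = z ∧
      DifferentiableOn ℂ g (ball (F^[m] z) δ) ∧
      InjOn g (ball (F^[m] z) δ) := by
    intro m hm
    induction m, hm using Nat.le_induction with
    | base =>
        intro z hz
        obtain ⟨g, h1, h2, h3, h4, h5⟩ := hg1 z hz
        exact ⟨g, by simpa using h1, by simpa using h2, by simpa using h3,
          by simpa using h4, by simpa using h5⟩
    | succ m hm IH =>
        intro z hz
        have hz' : F z ∈ K := hFK hz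
        obtain ⟨g', h1', h2', h3', h4', h5'⟩ := IH (F z) hz'
        obtain ⟨g1, h1, h2, h3, h4, h5⟩ := hg1 z hz
        have hstep : F^[m] (F z) = F^[m + 1] z := (Function.iterate_succ_apply F m z).symm
        rw [hstep] at h1' h2' h3' h4' h5'
        -- g' maps the disk around F^[m+1] z into the disk around F z
        have hmaps : MapsTo g' (ball (F^[m + 1] z) δ) (ball (F z) δ) := by
          intro w hw
          have hwd : dist w (F^[m + 1] z) < δ := mem_ball.mp hw
          have := h2' w hw
          rw [mem_ball]
          calc dist (g' w) (F z) ≤ 2 / (lam + 1) * dist w (F^[m + 1] z) := this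
          _ < 2 / (lam + 1) * δ := by
              exact mul_lt_mul_of_pos_left hwd hfac_pos
          _ ≤ δ := by rw [hδr2]; linarith
        refine ⟨g1 ∘ g', ?_, ?_, ?_, ?_, ?_⟩
        · intro w hw
          have hgw : g' w ∈ ball (F z) δ := hmaps hw
          calc F^[m + 1] ((g1 ∘ g') w) = F^[m] (F (g1 (g' w))) :=
                Function.iterate_succ_apply F m _
          _ = F^[m] (g' w) := by rw [h1 (g' w) hgw]
          _ = w := h1' w hw
        · intro w hw
          have hgw : g' w ∈ ball (F z) δ := hmaps hw
          calc dist ((g1 ∘ g') w) z ≤ 2 / (lam + 1) * dist (g' w) (F z) := h2 (g' w) hgw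
          _ ≤ 2 / (lam + 1) * (2 / (lam + 1) * dist w (F^[m + 1] z)) := by
              exact mul_le_mul_of_nonneg_left (h2' w hw) hfac_pos.le
          _ ≤ 2 / (lam + 1) * dist w (F^[m + 1] z) := by
              have h0 : (0:ℝ) ≤ dist w (F^[m + 1] z) := dist_nonneg
              have hin : 2 / (lam + 1) * dist w (F^[m + 1] z) ≤ dist w (F^[m + 1] z) :=
                mul_le_of_le_one_left h0 hfac_lt.le
              exact mul_le_mul_of_nonneg_left hin hfac_pos.le
        · show g1 (g' (F^[m + 1] z)) = z
          rw [h3', h3]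
        · exact DifferentiableOn.comp h4 h4' hmaps
        · exact InjOn.comp h5 h5' hmaps
  -- conclusion
  refine ⟨δ, hδ, ?_⟩
  intro z hz m hm
  obtain ⟨g, h1, h2, h3, h4, h5⟩ := main m hm z hz
  have hiter : f^[n * m] = F^[m] := Function.iterate_mul f n m
  rw [hiter]
  exact ⟨g, h4, h5, h3, h1⟩
end
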